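/- Weak compactness of the solution set: the set of all solutions of the dyadic system on [0,∞) with initial data in a fixed closed ball X of ℓ² (with nonnegative components) is compact in C([0,∞); X_w), the space of weakly continuous X-valued functions with the metric induced by the weak distance d_w(a,b) = Σ_j λ^{−j²} |a_j − b_j|/(1 + |a_j − b_j|). -/

import Mathlib

open Real Set MeasureTheory Finset Filter

noncomputable def lam : ℝ := (2:ℝ) ^ ((5:ℝ)/2)

/-- Right-hand side of the dyadic system: `da_j/dt = λ^{j-1} a_{j-1}² − λ^j a_j a_{j+1} + f_j`
with `a_{-1}=0`, forcing `f_0 > 0`, `f_j = 0` for `j ≥ 1`. -/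
noncomputable def dyadicRHS (f0 : ℝ) (a : ℕ → ℝ) : ℕ → ℝ
  | 0 => -(a 0 * a 1) + f0
  | (j+1) => lam ^ j * (a j)^2 - lam ^ (j+1) * a (j+1) * a (j+2)

/-- A weak (= classical) solution of the dyadic system on `[0,∞)`: an `ℓ²`-valued
function whose components are differentiable and satisfy the ODEs. -/
def IsDyadicSolution (f0 : ℝ) (a : ℝ → ℕ → ℝ) : Prop :=
  (∀ t ∈ Ici (0:ℝ), Summable (fun j => (a t j)^2)) ∧
  (∀ j, ∀ t ∈ Ici (0:ℝ), HasDerivWithinAt (fun s => a s j) (dyadicRHS f0 (a t) j) (Ici 0) t)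

/-- The weak distance on `ℓ²`: `d_w(x,y) = Σ_j λ^{−j²} |x_j − y_j| / (1 + |x_j − y_j|)`. -/
noncomputable def dw (x y : ℕ → ℝ) : ℝ :=
  ∑' j : ℕ, lam ^ (-((j:ℝ)^2)) * (|x j - y j| / (1 + |x j - y j|))

lemma lam_pos : 0 < lam := Real.rpow_pos_of_pos two_pos _
lemma one_le_lam : 1 ≤ lam := Real.one_le_rpow one_le_two (by norm_num)
lemma lam_nonneg : 0 ≤ lam := lam_pos.le

lemma sol_contOn {f0 : ℝ} {b : ℝ → ℕ → ℝ} (hs : IsDyadicSolution f0 b) (j : ℕ) :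
    ContinuousOn (fun t => b t j) (Ici 0) :=
  fun t ht => (hs.2 j t ht).continuousWithinAt

lemma sol_nonneg {f0 : ℝ} (hf0 : 0 < f0) {b : ℝ → ℕ → ℝ} (hs : IsDyadicSolution f0 b)
    (h0 : ∀ j, 0 ≤ b 0 j) (j : ℕ) : ∀ t ∈ Ici (0:ℝ), 0 ≤ b t j := by
  intro t ht
  set v : ℝ → ℝ := fun s => lam ^ j * b (max s 0) (j+1) with hv
  have hvc : Continuous v := by
    have h1 : ContinuousOn (fun s : ℝ => b s (j+1)) (Ici 0) := sol_contOn hs (j+1)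
    have hmax : Continuous fun s : ℝ => max s 0 := continuous_id.max continuous_const
    have h2 : ContinuousOn (fun s : ℝ => b (max s 0) (j+1)) univ :=
      h1.comp hmax.continuousOn (fun s _ => le_max_right s 0)
    exact continuous_const.mul (continuousOn_univ.mp h2)
  set C : ℝ → ℝ := fun s => ∫ u in (0:ℝ)..s, v u with hC
  have hCd : ∀ s, HasDerivAt C (v s) s := fun s =>
    (hvc.integral_hasStrictDerivAt 0 s).hasDerivAt
  set h : ℝ → ℝ := fun s => Real.exp (C s) * b s j with hh
  have hmono : MonotoneOn h (Ici 0) := by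
    apply monotoneOn_of_hasDerivWithinAt_nonneg (convex_Ici 0)
      (f' := fun x => Real.exp (C x) * v x * b x j + Real.exp (C x) * dyadicRHS f0 (b x) j)
    · have hCc : Continuous C := continuous_iff_continuousAt.mpr fun s => (hCd s).continuousAt
      exact ((Real.continuous_exp.comp hCc).continuousOn).mul (sol_contOn hs j)
    · intro x hx
      rw [interior_Ici] at hx
      have hb : HasDerivAt (fun s => b s j) (dyadicRHS f0 (b x) j) x :=
        (hs.2 j x (Set.mem_Ici.mpr (le_of_lt hx))).hasDerivAt (Ici_mem_nhds hx)
      have he : HasDerivAt (fun s => Real.exp (C s)) (Real.exp (C x) * v x) x := by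
        exact ((Real.hasDerivAt_exp (C x)).comp x (hCd x)).congr_deriv (by ring)
      exact ((he.mul hb).hasDerivWithinAt)
    · intro x hx
      rw [interior_Ici] at hx
      have hx0 : max x 0 = x := max_eq_left hx.le
      have key : Real.exp (C x) * v x * b x j + Real.exp (C x) * dyadicRHS f0 (b x) j
          = Real.exp (C x) * (v x * b x j + dyadicRHS f0 (b x) j) := by ring
      rw [key]
      apply mul_nonneg (Real.exp_nonneg _)
      cases j with
      | zero => simp only [dyadicRHS, hv, hx0, pow_zero]; nlinarith [hf0]
      | succ m =>
          simp only [dyadicRHS, hv, hx0]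
          have : lam ^ (m+1) * b x (m+1+1) * b x (m+1) +
              (lam ^ m * (b x m)^2 - lam ^ (m+1) * b x (m+1) * b x (m+1+1))
              = lam ^ m * (b x m)^2 := by ring
          rw [this]
          exact mul_nonneg (pow_nonneg lam_nonneg m) (sq_nonneg _)
  have h0' : h 0 ≤ h t := hmono (self_mem_Ici) ht ht
  have hC0 : C 0 = 0 := by simp [hC]
  have : (0:ℝ) ≤ h t := by
    calc (0:ℝ) ≤ b 0 j := h0 j
    _ = h 0 := by simp [hh, hC0]
    _ ≤ h t := h0'
  have hexp : 0 < Real.exp (C t) := Real.exp_pos _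
  simp only [hh] at this
  nlinarith [this, hexp]

noncomputable def Bnd (f0 R : ℝ) (ahat : ℕ → ℝ) (T : ℝ) : ℕ → ℝ
  | 0 => ahat 0 + R + f0 * T
  | (j+1) => ahat (j+1) + R + lam ^ j * (Bnd f0 R ahat T j)^2 * T

noncomputable def Dbd (f0 R : ℝ) (ahat : ℕ → ℝ) (T : ℝ) : ℕ → ℝ
  | 0 => Bnd f0 R ahat T 0 * Bnd f0 R ahat T 1 + f0
  | (j+1) => lam ^ j * (Bnd f0 R ahat T j)^2
      + lam ^ (j+1) * Bnd f0 R ahat T (j+1) * Bnd f0 R ahat T (j+2)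

variable {f0 R T : ℝ} {ahat : ℕ → ℝ}

lemma Bnd_nonneg (hf0 : 0 < f0) (hR : 0 ≤ R) (hahat : ∀ j, 0 ≤ ahat j) (hT : 0 ≤ T) :
    ∀ j, 0 ≤ Bnd f0 R ahat T j
  | 0 => by
      have := hahat 0
      simp only [Bnd]; positivity
  | (j+1) => by
      have := hahat (j+1)
      have h2 := pow_nonneg lam_nonneg j
      simp only [Bnd]; positivity

lemma Dbd_nonneg (hf0 : 0 < f0) (hR : 0 ≤ R) (hahat : ∀ j, 0 ≤ ahat j) (hT : 0 ≤ T) :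
    ∀ j, 0 ≤ Dbd f0 R ahat T j := by
  intro j
  have hB := Bnd_nonneg hf0 hR hahat hT (R := R)
  cases j with
  | zero =>
      have := hB 0; have := hB 1
      simp only [Dbd]; positivity
  | succ m =>
      have := hB m; have := hB (m+1); have := hB (m+2)
      have h2 := pow_nonneg lam_nonneg m
      have h3 := pow_nonneg lam_nonneg (m+1)
      simp only [Dbd]; positivity

/-- Upper bound for nonnegative solutions with initial data bounded by `ahat + R`. -/
lemma sol_upper (hf0 : 0 < f0) (hR : 0 ≤ R) (hahat : ∀ j, 0 ≤ ahat j)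
    {b : ℝ → ℕ → ℝ} (hs : IsDyadicSolution f0 b)
    (hnn : ∀ j, ∀ t ∈ Ici (0:ℝ), 0 ≤ b t j)
    (hinit : ∀ j, b 0 j ≤ ahat j + R) (hT : 0 ≤ T) :
    ∀ j, ∀ t ∈ Icc (0:ℝ) T, b t j ≤ Bnd f0 R ahat T j := by
  intro j
  induction j with
  | zero =>
      intro t ht
      have hmono : MonotoneOn (fun s => f0 * s - b s 0) (Icc 0 T) := by
        apply monotoneOn_of_hasDerivWithinAt_nonneg (convex_Icc 0 T)
          (f' := fun x => f0 - dyadicRHS f0 (b x) 0)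
        · exact (continuousOn_const.mul continuousOn_id).sub
            ((sol_contOn hs 0).mono (fun x hx => hx.1))
        · intro x hx
          rw [interior_Icc] at hx
          have hb : HasDerivAt (fun s => b s 0) (dyadicRHS f0 (b x) 0) x :=
            (hs.2 0 x hx.1.le).hasDerivAt (Ici_mem_nhds hx.1)
          have := ((hasDerivAt_id x).const_mul f0 |>.sub hb).hasDerivWithinAt
            (s := interior (Icc (0:ℝ) T))
          exact this.congr_deriv (by ring)
        · intro x hx
          rw [interior_Icc] at hx
          have h1 := hnn 0 x hx.1.le
          have h2 := hnn 1 x hx.1.le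
          simp only [dyadicRHS]
          nlinarith
      have := hmono (left_mem_Icc.mpr hT) ht ht.1
      simp only [mul_zero, zero_sub] at this
      have h0 := hinit 0
      simp only [Bnd]
      have hft : f0 * t ≤ f0 * T := by
        exact mul_le_mul_of_nonneg_left ht.2 hf0.le
      linarith
  | succ m ih =>
      intro t ht
      set M : ℝ := lam ^ m * (Bnd f0 R ahat T m)^2 with hM
      have hM0 : 0 ≤ M := by
        simp only [hM]
        exact mul_nonneg (pow_nonneg lam_nonneg m) (sq_nonneg _)
      have hmono : MonotoneOn (fun s => M * s - b s (m+1)) (Icc 0 T) := by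
        apply monotoneOn_of_hasDerivWithinAt_nonneg (convex_Icc 0 T)
          (f' := fun x => M - dyadicRHS f0 (b x) (m+1))
        · exact (continuousOn_const.mul continuousOn_id).sub
            ((sol_contOn hs (m+1)).mono (fun x hx => hx.1))
        · intro x hx
          rw [interior_Icc] at hx
          have hb : HasDerivAt (fun s => b s (m+1)) (dyadicRHS f0 (b x) (m+1)) x :=
            (hs.2 (m+1) x hx.1.le).hasDerivAt (Ici_mem_nhds hx.1)
          have := ((hasDerivAt_id x).const_mul M |>.sub hb).hasDerivWithinAt
            (s := interior (Icc (0:ℝ) T))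
          exact this.congr_deriv (by ring)
        · intro x hx
          rw [interior_Icc] at hx
          have h1 := hnn m x hx.1.le
          have h2 := hnn (m+1) x hx.1.le
          have h3 := hnn (m+2) x hx.1.le
          have h4 := ih x ⟨hx.1.le, hx.2.le⟩
          have h5 := pow_nonneg lam_nonneg m
          have h6 := pow_nonneg lam_nonneg (m+1)
          simp only [dyadicRHS, hM]
          nlinarith [mul_le_mul_of_nonneg_left (mul_le_mul h4 h4 h1 (Bnd_nonneg hf0 hR hahat hT m)) h5,
            mul_nonneg (mul_nonneg h6 h2) h3]
      have := hmono (left_mem_Icc.mpr hT) ht ht.1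
      simp only [mul_zero, zero_sub] at this
      simp only [hM] at this
      have h0 := hinit (m+1)
      simp only [Bnd]
      have hft : M * t ≤ M * T := mul_le_mul_of_nonneg_left ht.2 hM0
      simp only [hM] at hft
      linarith

/-- Bound on the right-hand side. -/
lemma rhs_bound (hf0 : 0 < f0) (c : ℕ → ℝ) (hc0 : ∀ i, 0 ≤ c i)
    (hcB : ∀ i, c i ≤ Bnd f0 R ahat T i) (hB : ∀ i, 0 ≤ Bnd f0 R ahat T i) (j : ℕ) :
    |dyadicRHS f0 c j| ≤ Dbd f0 R ahat T j := by
  cases j with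
  | zero =>
      simp only [dyadicRHS, Dbd]
      rw [abs_le]
      constructor
      · nlinarith [mul_le_mul (hcB 0) (hcB 1) (hc0 1) (hB 0)]
      · nlinarith [mul_nonneg (hc0 0) (hc0 1), mul_nonneg (hB 0) (hB 1)]
  | succ m =>
      simp only [dyadicRHS, Dbd]
      rw [abs_le]
      have h5 := pow_nonneg lam_nonneg m
      have h6 := pow_nonneg lam_nonneg (m+1)
      have e1 : c m ^ 2 ≤ Bnd f0 R ahat T m ^ 2 := by nlinarith [hcB m, hc0 m]
      have e2 : c (m+1) * c (m+2) ≤ Bnd f0 R ahat T (m+1) * Bnd f0 R ahat T (m+2) :=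
        mul_le_mul (hcB (m+1)) (hcB (m+2)) (hc0 (m+2)) (hB (m+1))
      constructor
      · nlinarith [mul_le_mul_of_nonneg_left e2 h6, mul_nonneg h5 (sq_nonneg (c m))]
      · nlinarith [mul_le_mul_of_nonneg_left e1 h5,
          mul_nonneg (mul_nonneg h6 (hc0 (m+1))) (hc0 (m+2))]

/-- Equi-Lipschitz estimate on `[0,T]`. -/
lemma sol_lip (hf0 : 0 < f0) (hR : 0 ≤ R) (hahat : ∀ j, 0 ≤ ahat j)
    {b : ℝ → ℕ → ℝ} (hs : IsDyadicSolution f0 b)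
    (hnn : ∀ j, ∀ t ∈ Ici (0:ℝ), 0 ≤ b t j)
    (hinit : ∀ j, b 0 j ≤ ahat j + R) (hT : 0 ≤ T) (j : ℕ) :
    ∀ s ∈ Icc (0:ℝ) T, ∀ t ∈ Icc (0:ℝ) T,
      |b t j - b s j| ≤ Dbd f0 R ahat T j * |t - s| := by
  intro s hsm t htm
  have key := Convex.norm_image_sub_le_of_norm_hasDerivWithin_le
    (f := fun u => b u j) (f' := fun x => dyadicRHS f0 (b x) j)
    (s := Icc (0:ℝ) T) (C := Dbd f0 R ahat T j)
    (fun x hx => (hs.2 j x hx.1).mono (fun y hy => hy.1))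
    (fun x hx => by
      rw [Real.norm_eq_abs]
      exact rhs_bound hf0 (b x) (fun i => hnn i x hx.1)
        (fun i => sol_upper hf0 hR hahat hs hnn hinit hT i x hx)
        (Bnd_nonneg hf0 hR hahat hT) j)
    (convex_Icc 0 T) hsm htm
  simpa [Real.norm_eq_abs] using key

lemma telescope (f0 : ℝ) (c : ℕ → ℝ) (N : ℕ) :
    ∑ j ∈ Finset.range (N+1), 2 * c j * dyadicRHS f0 c j
      = 2 * f0 * c 0 - 2 * lam ^ N * (c N)^2 * c (N+1) := by
  induction N with
  | zero =>
      rw [Finset.sum_range_one]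
      show 2 * c 0 * (-(c 0 * c 1) + f0) = _
      rw [pow_zero]; ring
  | succ n ih =>
      rw [Finset.sum_range_succ, ih]
      simp only [dyadicRHS]
      ring

/-- Energy estimate: `‖a(t)‖ ≤ ‖a(0)‖ + f0 t` (partial-sum version). -/
lemma sol_energy (hf0 : 0 < f0)
    {b : ℝ → ℕ → ℝ} (hs : IsDyadicSolution f0 b)
    (hnn : ∀ j, ∀ t ∈ Ici (0:ℝ), 0 ≤ b t j)
    {E0 : ℝ} (hE0 : 0 ≤ E0)
    (hinitE : ∀ N : ℕ, ∑ j ∈ Finset.range N, (b 0 j)^2 ≤ E0) :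
    ∀ N : ℕ, ∀ t ∈ Ici (0:ℝ), ∑ j ∈ Finset.range N, (b t j)^2
      ≤ (Real.sqrt E0 + f0 * t)^2 := by
  have main : ∀ N : ℕ, ∀ t ∈ Ici (0:ℝ), ∑ j ∈ Finset.range (N+1), (b t j)^2
      ≤ (Real.sqrt E0 + f0 * t)^2 := by
    intro N t ht
    set E : ℝ → ℝ := fun s => ∑ j ∈ Finset.range (N+1), (b s j)^2 with hE
    have hEnn : ∀ s, 0 ≤ E s := fun s => Finset.sum_nonneg fun j _ => sq_nonneg _
    have hEderiv : ∀ s ∈ Ici (0:ℝ),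
        HasDerivWithinAt E (∑ j ∈ Finset.range (N+1), 2 * b s j * dyadicRHS f0 (b s) j)
          (Ici 0) s := by
      intro s hsm
      apply HasDerivWithinAt.fun_sum
      intro j _
      have := ((hs.2 j s hsm).pow 2)
      exact (by simpa [mul_comm, mul_assoc, mul_left_comm] using this :
        HasDerivWithinAt ((fun s => b s j)^2) (2 * b s j * dyadicRHS f0 (b s) j) (Ici 0) s)
    have hEcont : ContinuousOn E (Ici 0) := fun s hsm => (hEderiv s hsm).continuousWithinAt
    -- for every ε > 0 we get the bound with E0 + ε
    have key : ∀ ε : ℝ, 0 < ε → E t ≤ (Real.sqrt (E0 + ε) + f0 * t)^2 := by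
      intro ε hε
      have hmono : MonotoneOn (fun s => f0 * s - Real.sqrt (E s + ε)) (Ici 0) := by
        apply monotoneOn_of_hasDerivWithinAt_nonneg (convex_Ici 0)
          (f' := fun x => f0 - 1 / (2 * Real.sqrt (E x + ε)) *
            (∑ j ∈ Finset.range (N+1), 2 * b x j * dyadicRHS f0 (b x) j))
        · apply (continuousOn_const.mul continuousOn_id).sub
          exact (Real.continuous_sqrt.comp_continuousOn (hEcont.add continuousOn_const))
        · intro x hx
          rw [interior_Ici] at hx
          have hEx : HasDerivAt E (∑ j ∈ Finset.range (N+1), 2 * b x j * dyadicRHS f0 (b x) j) x :=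
            (hEderiv x (Set.mem_Ici.mpr hx.le)).hasDerivAt (Ici_mem_nhds hx)
          have hEε : E x + ε ≠ 0 := by nlinarith [hEnn x]
          have hsq : HasDerivAt (fun s => Real.sqrt (E s + ε))
              (1 / (2 * Real.sqrt (E x + ε)) *
                (∑ j ∈ Finset.range (N+1), 2 * b x j * dyadicRHS f0 (b x) j)) x :=
            (Real.hasDerivAt_sqrt hEε).comp x (hEx.add_const ε)
          exact (((hasDerivAt_id x).const_mul f0).sub hsq).hasDerivWithinAt.congr_deriv
            (by ring)
        · intro x hx
          rw [interior_Ici] at hx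
          have hsqrt_pos : 0 < Real.sqrt (E x + ε) :=
            Real.sqrt_pos.mpr (by nlinarith [hEnn x])
          have hder_le : (∑ j ∈ Finset.range (N+1), 2 * b x j * dyadicRHS f0 (b x) j)
              ≤ 2 * f0 * Real.sqrt (E x + ε) := by
            rw [telescope]
            have h1 : 0 ≤ 2 * lam ^ N * (b x N)^2 * b x (N+1) := by
              have := hnn (N+1) x (Set.mem_Ici.mpr hx.le)
              have := pow_nonneg lam_nonneg N
              positivity
            have h2 : b x 0 ≤ Real.sqrt (E x + ε) := by
              have hb0 : (b x 0)^2 ≤ E x + ε := by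
                have : (b x 0)^2 ≤ E x := by
                  apply Finset.single_le_sum (f := fun j => (b x j)^2)
                    (fun j _ => sq_nonneg _)
                  exact Finset.mem_range.mpr (Nat.succ_pos N)
                linarith
              have hnn2 : (0:ℝ) ≤ E x + ε := by nlinarith [hEnn x]
              nlinarith [Real.sq_sqrt hnn2, Real.sqrt_nonneg (E x + ε), hnn 0 x (Set.mem_Ici.mpr hx.le),
                sq_nonneg (b x 0 - Real.sqrt (E x + ε))]
            nlinarith [hf0]
          have : 1 / (2 * Real.sqrt (E x + ε)) *
              (∑ j ∈ Finset.range (N+1), 2 * b x j * dyadicRHS f0 (b x) j) ≤ f0 := by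
            rw [div_mul_eq_mul_div, one_mul, div_le_iff₀ (by positivity)]
            calc (∑ j ∈ Finset.range (N+1), 2 * b x j * dyadicRHS f0 (b x) j)
                ≤ 2 * f0 * Real.sqrt (E x + ε) := hder_le
              _ = f0 * (2 * Real.sqrt (E x + ε)) := by ring
          linarith
      have h01 := hmono self_mem_Ici ht ht
      simp only [mul_zero, zero_sub] at h01
      -- √(E t + ε) ≤ √(E 0 + ε) + f0 t
      have hsq_le : Real.sqrt (E t + ε) ≤ Real.sqrt (E 0 + ε) + f0 * t := by linarith
      have hE0ε : E 0 + ε ≤ E0 + ε := by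
        have := hinitE (N+1); simp only [hE]; linarith
      have h2 : Real.sqrt (E 0 + ε) ≤ Real.sqrt (E0 + ε) := Real.sqrt_le_sqrt hE0ε
      have h3 : Real.sqrt (E t + ε) ≤ Real.sqrt (E0 + ε) + f0 * t := by linarith
      have h4 : E t + ε ≤ (Real.sqrt (E0 + ε) + f0 * t)^2 := by
        have hnn' : 0 ≤ E t + ε := by nlinarith [hEnn t]
        have := Real.sq_sqrt hnn'
        nlinarith [Real.sqrt_nonneg (E t + ε), h3]
      linarith
    -- let ε → 0
    have hlim : Tendsto (fun ε : ℝ => (Real.sqrt (E0 + ε) + f0 * t)^2) (nhdsWithin 0 (Ioi 0))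
        (nhds ((Real.sqrt E0 + f0 * t)^2)) := by
      have : ContinuousAt (fun ε : ℝ => (Real.sqrt (E0 + ε) + f0 * t)^2) 0 := by
        have h1 : Continuous (fun ε : ℝ => (Real.sqrt (E0 + ε) + f0 * t)^2) := by
          continuity
        exact h1.continuousAt
      simpa using this.continuousWithinAt.tendsto
    exact ge_of_tendsto hlim (eventually_nhdsWithin_of_forall (fun ε hε => key ε hε))
  intro N t ht
  cases N with
  | zero =>
      simp only [Finset.range_zero, Finset.sum_empty]
      positivity
  | succ n => exact main n t ht

lemma rhs_continuousOn {f0 : ℝ} {c : ℝ → ℕ → ℝ} {s : Set ℝ}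
    (hc : ∀ i, ContinuousOn (fun t => c t i) s) (j : ℕ) :
    ContinuousOn (fun t => dyadicRHS f0 (c t) j) s := by
  cases j with
  | zero =>
      simp only [dyadicRHS]
      exact (((hc 0).mul (hc 1)).neg).add continuousOn_const
  | succ m =>
      simp only [dyadicRHS]
      exact (continuousOn_const.mul ((hc m).pow 2)).sub
        ((continuousOn_const.mul (hc (m+1))).mul (hc (m+2)))

lemma rhs_tendsto {f0 : ℝ} {u : ℕ → ℕ → ℝ} {l : ℕ → ℝ}
    (h : ∀ i, Tendsto (fun k => u k i) atTop (nhds (l i))) (j : ℕ) :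
    Tendsto (fun k => dyadicRHS f0 (u k) j) atTop (nhds (dyadicRHS f0 l j)) := by
  cases j with
  | zero =>
      simp only [dyadicRHS]
      exact (((h 0).mul (h 1)).neg).add tendsto_const_nhds
  | succ m =>
      simp only [dyadicRHS]
      exact ((tendsto_const_nhds.mul ((h m).pow 2)).sub
        ((tendsto_const_nhds.mul (h (m+1))).mul (h (m+2))))

lemma sol_integral {f0 : ℝ} {b : ℝ → ℕ → ℝ} (hs : IsDyadicSolution f0 b) (j : ℕ)
    {t : ℝ} (ht : 0 ≤ t) :
    ∫ s in (0:ℝ)..t, dyadicRHS f0 (b s) j = b t j - b 0 j := by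
  apply intervalIntegral.integral_eq_sub_of_hasDeriv_right_of_le ht
  · exact (sol_contOn hs j).mono (fun x hx => hx.1)
  · intro x hx
    exact ((hs.2 j x hx.1.le).hasDerivAt (Ici_mem_nhds hx.1)).hasDerivWithinAt
  · apply ContinuousOn.intervalIntegrable
    rw [uIcc_of_le ht]
    exact (rhs_continuousOn (fun i => sol_contOn hs i) j).mono (fun x hx => hx.1)

lemma one_lt_lam : 1 < lam := by
  rw [lam]
  rw [Real.one_lt_rpow_iff_of_pos two_pos]
  norm_num

lemma weight_summable : Summable (fun j : ℕ => lam ^ (-((j:ℝ)^2))) := by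
  have hg : Summable (fun j : ℕ => (lam⁻¹) ^ j) := by
    apply summable_geometric_of_lt_one (inv_nonneg.mpr lam_nonneg)
    rw [inv_lt_one_iff₀]
    right; exact one_lt_lam
  refine Summable.of_nonneg_of_le (fun j => (Real.rpow_pos_of_pos lam_pos _).le) ?_ hg
  intro j
  have h1 : (j:ℝ) ≤ (j:ℝ)^2 := by
    have : j ≤ j^2 := Nat.le_self_pow two_ne_zero j
    calc (j:ℝ) ≤ ((j^2 : ℕ) : ℝ) := by exact_mod_cast this
      _ = (j:ℝ)^2 := by push_cast; ring
  have h2 : lam ^ (-((j:ℝ)^2)) ≤ lam ^ (-(j:ℝ)) :=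
    Real.rpow_le_rpow_of_exponent_le one_le_lam (by linarith)
  have h3 : lam ^ (-(j:ℝ)) = (lam⁻¹) ^ j := by
    rw [Real.rpow_neg lam_nonneg, Real.rpow_natCast, inv_pow]
  linarith [h2, h3.le, h3.ge]

lemma weight_le_one (j : ℕ) : lam ^ (-((j:ℝ)^2)) ≤ 1 :=
  Real.rpow_le_one_of_one_le_of_nonpos one_le_lam (neg_nonpos.mpr (sq_nonneg _))

set_option maxHeartbeats 2000000 in
theorem weak_compactness (f0 : ℝ) (hf0 : 0 < f0) (R : ℝ) (hR : 0 ≤ R)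
    (ahat : ℕ → ℝ)
    (hahat : ∀ j, ahat j = (2:ℝ)^((5:ℝ)/12) * Real.sqrt f0 * (2:ℝ)^(-(5*(j:ℝ))/6))
    (aseq : ℕ → ℝ → ℕ → ℝ)
    (hsol : ∀ k, IsDyadicSolution f0 (aseq k))
    (hX : ∀ k, (∑' j, (aseq k 0 j - ahat j)^2) ≤ R^2)
    (hpos : ∀ k j, 0 ≤ aseq k 0 j) :
    ∃ φ : ℕ → ℕ, StrictMono φ ∧ ∃ a : ℝ → ℕ → ℝ,
      IsDyadicSolution f0 a ∧ (∑' j, (a 0 j - ahat j)^2) ≤ R^2 ∧ (∀ j, 0 ≤ a 0 j) ∧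
      ∀ ε : ℝ, 0 < ε → ∀ T : ℝ, 0 < T → ∃ K : ℕ, ∀ k, K ≤ k → ∀ t ∈ Icc (0:ℝ) T,
        dw (aseq (φ k) t) (a t) < ε := by
  -- facts about ahat
  have hahat_nn : ∀ j, 0 ≤ ahat j := by
    intro j; rw [hahat j]; positivity
  have Sahat : Summable (fun j => (ahat j)^2) := by
    set c := (2:ℝ)^((5:ℝ)/12) * Real.sqrt f0 with hc
    set r := (2:ℝ)^(-(5:ℝ)/6) with hr
    have hform : ∀ j : ℕ, ahat j = c * r ^ j := by
      intro j
      rw [hahat j]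
      congr 1
      have he : -(5*(j:ℝ))/6 = (-(5:ℝ)/6) * (j:ℝ) := by ring
      rw [he, Real.rpow_mul (by norm_num : (0:ℝ) ≤ 2), Real.rpow_natCast]
    have hr0 : 0 < r := Real.rpow_pos_of_pos two_pos _
    have hr1 : r < 1 := Real.rpow_lt_one_of_one_lt_of_neg one_lt_two (by norm_num)
    have : Summable (fun j : ℕ => c^2 * (r^2)^j) := by
      apply Summable.mul_left
      exact summable_geometric_of_lt_one (by positivity) (by nlinarith)
    apply this.congr
    intro j
    rw [hform j]; ring
  -- per-solution facts
  have hsum0 : ∀ k, Summable (fun j => (aseq k 0 j)^2) := fun k => (hsol k).1 0 self_mem_Ici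
  have hdiffsum : ∀ k, Summable (fun j => (aseq k 0 j - ahat j)^2) := by
    intro k
    refine Summable.of_nonneg_of_le (fun j => sq_nonneg _) ?_
      (((hsum0 k).mul_left 2).add (Sahat.mul_left 2))
    intro j; nlinarith [sq_nonneg (aseq k 0 j + ahat j)]
  have hinit : ∀ k j, aseq k 0 j ≤ ahat j + R := by
    intro k j
    have h1 : (aseq k 0 j - ahat j)^2 ≤ R^2 :=
      le_trans (Summable.le_tsum (hdiffsum k) j (fun i _ => sq_nonneg _)) (hX k)
    nlinarith [sq_nonneg (aseq k 0 j - ahat j - R), sq_nonneg (aseq k 0 j - ahat j + R)]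
  have hnn : ∀ k, ∀ j, ∀ t ∈ Ici (0:ℝ), 0 ≤ aseq k t j :=
    fun k => sol_nonneg hf0 (hsol k) (hpos k)
  have hup : ∀ k (T:ℝ), 0 ≤ T → ∀ j, ∀ t ∈ Icc (0:ℝ) T, aseq k t j ≤ Bnd f0 R ahat T j :=
    fun k T hT => sol_upper hf0 hR hahat_nn (hsol k) (hnn k) (hinit k) hT
  have hlip : ∀ k (T:ℝ), 0 ≤ T → ∀ j, ∀ s ∈ Icc (0:ℝ) T, ∀ t ∈ Icc (0:ℝ) T,
      |aseq k t j - aseq k s j| ≤ Dbd f0 R ahat T j * |t - s| :=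
    fun k T hT => sol_lip hf0 hR hahat_nn (hsol k) (hnn k) (hinit k) hT
  set A := ∑' j, (ahat j)^2 with hA
  have hA0 : 0 ≤ A := tsum_nonneg fun j => sq_nonneg _
  set E0 : ℝ := 2*R^2 + 2*A with hE0def
  have hE0nn : 0 ≤ E0 := by positivity
  have hinitE : ∀ k (N:ℕ), ∑ j ∈ Finset.range N, (aseq k 0 j)^2 ≤ E0 := by
    intro k N
    have step : ∀ j, (aseq k 0 j)^2 ≤ 2*(aseq k 0 j - ahat j)^2 + 2*(ahat j)^2 := by
      intro j; nlinarith [sq_nonneg (aseq k 0 j - 2*ahat j)]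
    calc ∑ j ∈ Finset.range N, (aseq k 0 j)^2
        ≤ ∑ j ∈ Finset.range N, (2*(aseq k 0 j - ahat j)^2 + 2*(ahat j)^2) :=
          Finset.sum_le_sum (fun j _ => step j)
      _ = 2 * ∑ j ∈ Finset.range N, (aseq k 0 j - ahat j)^2
            + 2 * ∑ j ∈ Finset.range N, (ahat j)^2 := by
          rw [Finset.sum_add_distrib, Finset.mul_sum, Finset.mul_sum]
      _ ≤ 2 * R^2 + 2 * A := by
          have h1 : ∑ j ∈ Finset.range N, (aseq k 0 j - ahat j)^2 ≤ R^2 :=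
            le_trans ((hdiffsum k).sum_le_tsum _ (fun j _ => sq_nonneg _)) (hX k)
          have h2 : ∑ j ∈ Finset.range N, (ahat j)^2 ≤ A :=
            Sahat.sum_le_tsum _ (fun j _ => sq_nonneg _)
          linarith
  have hen : ∀ k, ∀ N:ℕ, ∀ t ∈ Ici (0:ℝ), ∑ j ∈ Finset.range N, (aseq k t j)^2
      ≤ (Real.sqrt E0 + f0*t)^2 :=
    fun k => sol_energy hf0 (hsol k) (hnn k) hE0nn (hinitE k)
  -- extraction of a subsequence converging at all rational times
  obtain ⟨L, hLmem, φ, hφ, hconv⟩ :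
      ∃ L ∈ Set.univ.pi (fun p : ℚ × ℕ => Icc (0:ℝ) (Bnd f0 R ahat (max (p.1:ℝ) 0) p.2)),
        ∃ φ, StrictMono φ ∧
          Tendsto ((fun k (p : ℚ × ℕ) => aseq k (max (p.1:ℝ) 0) p.2) ∘ φ) atTop (nhds L) := by
    apply (isCompact_univ_pi fun p => isCompact_Icc).isSeqCompact.subseq_of_frequently_in
    apply Filter.Frequently.of_forall
    intro k
    intro p _
    refine ⟨hnn k p.2 _ (Set.mem_Ici.mpr (le_max_right _ 0)), ?_⟩
    exact hup k _ (le_max_right _ 0) p.2 _ ⟨le_max_right _ 0, le_refl _⟩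
  have hcv : ∀ q : ℚ, ∀ j : ℕ, Tendsto (fun k => aseq (φ k) (max (q:ℝ) 0) j) atTop
      (nhds (L (q, j))) := fun q j => tendsto_pi_nhds.mp hconv (q, j)
  -- uniform Cauchy property on compact time intervals, componentwise
  have ucauchy : ∀ (j : ℕ) (T : ℝ), 0 ≤ T → ∀ ε : ℝ, 0 < ε → ∃ K, ∀ k, K ≤ k → ∀ m, K ≤ m →
      ∀ t ∈ Icc (0:ℝ) T, |aseq (φ k) t j - aseq (φ m) t j| ≤ ε := by
    intro j T hT ε hε
    set D := Dbd f0 R ahat T j with hD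
    have hD0 : 0 ≤ D := Dbd_nonneg hf0 hR hahat_nn hT j
    obtain ⟨δ, hδ0, hδle⟩ : ∃ δ : ℚ, 0 < (δ:ℝ) ∧ (δ:ℝ) ≤ ε/(3*(D+1)) := by
      obtain ⟨δ, h1, h2⟩ := exists_rat_btwn (show (0:ℝ) < ε/(3*(D+1)) by positivity)
      exact ⟨δ, by exact_mod_cast h1, h2.le⟩
    set N := Nat.ceil (T / (δ:ℝ)) with hN
    have hgrid : ∀ i : ℕ, ∃ K, ∀ k, K ≤ k → ∀ m, K ≤ m →
        |aseq (φ k) ((i:ℝ) * δ) j - aseq (φ m) ((i:ℝ) * δ) j| ≤ ε/3 := by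
      intro i
      have h := hcv ((i:ℚ) * δ) j
      have hmax : max ((((i:ℚ)*δ : ℚ)):ℝ) 0 = ((i:ℝ) * (δ:ℝ)) := by
        push_cast
        exact max_eq_left (by positivity)
      rw [hmax] at h
      have hC : CauchySeq (fun k => aseq (φ k) ((i:ℝ)*(δ:ℝ)) j) := h.cauchySeq
      obtain ⟨K, hK⟩ := Metric.cauchySeq_iff.mp hC (ε/3) (by positivity)
      exact ⟨K, fun k hk m hm => by
        have := hK k hk m hm; rw [Real.dist_eq] at this; exact this.le⟩
    choose K hK using hgrid
    refine ⟨Finset.sup (Finset.range (N+1)) K, ?_⟩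
    intro k hk m hm t ht
    set i := Nat.floor (t / (δ:ℝ)) with hi
    have hdivle : t / (δ:ℝ) ≤ T / (δ:ℝ) := (div_le_div_iff_of_pos_right hδ0).mpr ht.2
    have hiN : i ≤ N := le_trans (Nat.floor_le_floor hdivle) (Nat.floor_le_ceil _)
    have hgrid_le : (i:ℝ)*(δ:ℝ) ≤ t := by
      have h1 : (i:ℝ) ≤ t / (δ:ℝ) := Nat.floor_le (div_nonneg ht.1 hδ0.le)
      calc (i:ℝ)*(δ:ℝ) ≤ (t/(δ:ℝ))*(δ:ℝ) := mul_le_mul_of_nonneg_right h1 hδ0.le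
        _ = t := div_mul_cancel₀ t (ne_of_gt hδ0)
    have hclose : t - (i:ℝ)*(δ:ℝ) ≤ (δ:ℝ) := by
      have h2 : t / (δ:ℝ) < (i:ℝ) + 1 := Nat.lt_floor_add_one (t / (δ:ℝ))
      have h3 : t < ((i:ℝ)+1)*(δ:ℝ) := by
        calc t = (t/(δ:ℝ))*(δ:ℝ) := (div_mul_cancel₀ t (ne_of_gt hδ0)).symm
          _ < ((i:ℝ)+1)*(δ:ℝ) := by exact mul_lt_mul_of_pos_right h2 hδ0
      nlinarith
    have hgrid_mem : (i:ℝ)*(δ:ℝ) ∈ Icc (0:ℝ) T := ⟨by positivity, le_trans hgrid_le ht.2⟩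
    have hKi : K i ≤ Finset.sup (Finset.range (N+1)) K :=
      Finset.le_sup (Finset.mem_range.mpr (Nat.lt_succ_of_le hiN))
    have e1 := hlip (φ k) T hT j ((i:ℝ)*(δ:ℝ)) hgrid_mem t ht
    have e2 := hlip (φ m) T hT j ((i:ℝ)*(δ:ℝ)) hgrid_mem t ht
    have e3 := hK i k (le_trans hKi hk) m (le_trans hKi hm)
    have habs : |t - (i:ℝ)*(δ:ℝ)| ≤ (δ:ℝ) := by
      rw [abs_of_nonneg (by linarith)]; exact hclose
    have hDδ : D * (δ:ℝ) ≤ ε/3 := by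
      have : D * (δ:ℝ) ≤ D * (ε/(3*(D+1))) := mul_le_mul_of_nonneg_left hδle hD0
      have h4 : D * (ε/(3*(D+1))) ≤ ε/3 := by
        have hD1 : (0:ℝ) < D + 1 := by linarith
        rw [mul_comm, div_mul_eq_mul_div, div_le_div_iff₀ (by positivity) (by norm_num : (0:ℝ) < 3)]
        nlinarith
      linarith
    have b1 : |aseq (φ k) t j - aseq (φ k) ((i:ℝ)*(δ:ℝ)) j| ≤ ε/3 := by
      refine le_trans e1 (le_trans (mul_le_mul_of_nonneg_left habs hD0) hDδ)
    have b2 : |aseq (φ m) t j - aseq (φ m) ((i:ℝ)*(δ:ℝ)) j| ≤ ε/3 := by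
      refine le_trans e2 (le_trans (mul_le_mul_of_nonneg_left habs hD0) hDδ)
    calc |aseq (φ k) t j - aseq (φ m) t j|
        = |(aseq (φ k) t j - aseq (φ k) ((i:ℝ)*(δ:ℝ)) j)
            + (aseq (φ k) ((i:ℝ)*(δ:ℝ)) j - aseq (φ m) ((i:ℝ)*(δ:ℝ)) j)
            + (aseq (φ m) ((i:ℝ)*(δ:ℝ)) j - aseq (φ m) t j)| := by ring_nf
      _ ≤ _ := by
          have habs3 := abs_add_three
            (aseq (φ k) t j - aseq (φ k) ((i:ℝ)*(δ:ℝ)) j)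
            (aseq (φ k) ((i:ℝ)*(δ:ℝ)) j - aseq (φ m) ((i:ℝ)*(δ:ℝ)) j)
            (aseq (φ m) ((i:ℝ)*(δ:ℝ)) j - aseq (φ m) t j)
          have b2' : |aseq (φ m) ((i:ℝ)*(δ:ℝ)) j - aseq (φ m) t j| ≤ ε/3 := by
            rw [abs_sub_comm]; exact b2
          calc _ ≤ _ := habs3
            _ ≤ ε/3 + ε/3 + ε/3 := by gcongr
            _ = ε := by ring
    -- pointwise Cauchy, define the limit
  have pcauchy : ∀ (t : ℝ) (j : ℕ), CauchySeq (fun k => aseq (φ k) (max t 0) j) := by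
    intro t j
    rw [Metric.cauchySeq_iff']
    intro ε hε
    obtain ⟨K, hK⟩ := ucauchy j (max t 0) (le_max_right _ _) (ε/2) (by positivity)
    refine ⟨K, fun n hn => ?_⟩
    have := hK n hn K le_rfl (max t 0) ⟨le_max_right _ _, le_rfl⟩
    rw [Real.dist_eq]; linarith
  set a : ℝ → ℕ → ℝ := fun t j => limUnder atTop (fun k => aseq (φ k) (max t 0) j) with ha
  have htnd : ∀ (t : ℝ) (j : ℕ),
      Tendsto (fun k => aseq (φ k) (max t 0) j) atTop (nhds (a t j)) :=
    fun t j => (pcauchy t j).tendsto_limUnder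
  have htnd' : ∀ (j : ℕ) (t : ℝ), 0 ≤ t →
      Tendsto (fun k => aseq (φ k) t j) atTop (nhds (a t j)) := by
    intro j t ht
    have := htnd t j
    rwa [max_eq_left ht] at this
  -- uniform convergence on compact intervals, componentwise
  have hunif : ∀ (j : ℕ) (T : ℝ), 0 ≤ T → ∀ ε : ℝ, 0 < ε → ∃ K, ∀ k, K ≤ k →
      ∀ t ∈ Icc (0:ℝ) T, |aseq (φ k) t j - a t j| ≤ ε := by
    intro j T hT ε hε
    obtain ⟨K, hK⟩ := ucauchy j T hT ε hε
    refine ⟨K, fun k hk t ht => ?_⟩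
    have hTend : Tendsto (fun m => |aseq (φ k) t j - aseq (φ m) t j|) atTop
        (nhds (|aseq (φ k) t j - a t j|)) :=
      (tendsto_const_nhds.sub (htnd' j t ht.1)).abs
    exact le_of_tendsto hTend (eventually_atTop.mpr ⟨K, fun m hm => hK k hk m hm t ht⟩)
  -- basic properties of the limit
  have hann : ∀ (j : ℕ) (t : ℝ), 0 ≤ t → 0 ≤ a t j := fun j t ht =>
    ge_of_tendsto (htnd' j t ht) (Eventually.of_forall fun k => hnn (φ k) j t ht)
  have haup : ∀ (T:ℝ), 0 ≤ T → ∀ j, ∀ t ∈ Icc (0:ℝ) T, a t j ≤ Bnd f0 R ahat T j :=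
    fun T hT j t ht =>
    le_of_tendsto (htnd' j t ht.1) (Eventually.of_forall fun k => hup (φ k) T hT j t ht)
  have halip : ∀ (T:ℝ), 0 ≤ T → ∀ j, ∀ s ∈ Icc (0:ℝ) T, ∀ t ∈ Icc (0:ℝ) T,
      |a t j - a s j| ≤ Dbd f0 R ahat T j * |t - s| := by
    intro T hT j s hs t ht
    have hTend : Tendsto (fun k => |aseq (φ k) t j - aseq (φ k) s j|) atTop
        (nhds (|a t j - a s j|)) := ((htnd' j t ht.1).sub (htnd' j s hs.1)).abs
    exact le_of_tendsto hTend (Eventually.of_forall fun k => hlip (φ k) T hT j s hs t ht)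
  have hacont : ∀ j, ContinuousOn (fun t => a t j) (Ici 0) := by
    intro j t₀ ht₀
    have ht₀' : (0:ℝ) ≤ t₀ := ht₀
    have hT1 : (0:ℝ) ≤ t₀ + 1 := by linarith
    have hlipOn : LipschitzOnWith (Real.toNNReal (Dbd f0 R ahat (t₀+1) j))
        (fun t => a t j) (Icc 0 (t₀+1)) := by
      apply LipschitzOnWith.of_dist_le_mul
      intro x hx y hy
      rw [Real.dist_eq, Real.dist_eq]
      refine le_trans (halip (t₀+1) hT1 j y hy x hx) ?_
      exact mul_le_mul_of_nonneg_right (Real.le_coe_toNNReal _) (abs_nonneg _)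
    have hC : ContinuousWithinAt (fun t => a t j) (Icc 0 (t₀+1)) t₀ :=
      hlipOn.continuousOn t₀ ⟨ht₀', by linarith⟩
    apply hC.mono_of_mem_nhdsWithin
    have hmem : Ici (0:ℝ) ∩ Iic (t₀+1) ∈ nhdsWithin t₀ (Ici 0) :=
      inter_mem_nhdsWithin _ (Iic_mem_nhds (by linarith))
    rwa [Ici_inter_Iic] at hmem
  -- energy bound for the limit, summability
  have haen : ∀ (t : ℝ), 0 ≤ t → ∀ N : ℕ,
      ∑ j ∈ Finset.range N, (a t j)^2 ≤ (Real.sqrt E0 + f0*t)^2 := by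
    intro t ht N
    have hTend : Tendsto (fun k => ∑ j ∈ Finset.range N, (aseq (φ k) t j)^2) atTop
        (nhds (∑ j ∈ Finset.range N, (a t j)^2)) :=
      tendsto_finset_sum _ (fun j _ => ((htnd' j t ht).pow 2))
    exact le_of_tendsto hTend (Eventually.of_forall fun k => hen (φ k) N t ht)
  have hasum : ∀ t ∈ Ici (0:ℝ), Summable (fun j => (a t j)^2) := fun t ht =>
    summable_of_sum_range_le (fun j => sq_nonneg _) (haen t ht)
  -- the limit stays in the ball
  have haball : (∑' j, (a 0 j - ahat j)^2) ≤ R^2 := by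
    have hpart : ∀ N : ℕ, ∑ j ∈ Finset.range N, (a 0 j - ahat j)^2 ≤ R^2 := by
      intro N
      have htd : Tendsto (fun k => ∑ j ∈ Finset.range N, (aseq (φ k) 0 j - ahat j)^2) atTop
          (nhds (∑ j ∈ Finset.range N, (a 0 j - ahat j)^2)) :=
        tendsto_finset_sum _ (fun j _ => (((htnd' j 0 le_rfl).sub tendsto_const_nhds).pow 2))
      apply le_of_tendsto htd
      apply Eventually.of_forall
      intro k
      exact le_trans ((hdiffsum (φ k)).sum_le_tsum _ (fun j _ => sq_nonneg _)) (hX (φ k))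
    exact Summable.tsum_le_of_sum_range_le
      (summable_of_sum_range_le (fun j => sq_nonneg _) hpart) hpart
  -- the limit solves the system
  have hrep : ∀ (j : ℕ) (t : ℝ), 0 ≤ t →
      a t j = a 0 j + ∫ s in (0:ℝ)..t, dyadicRHS f0 (a s) j := by
    intro j t ht
    have hk : ∀ k, aseq (φ k) t j
        = aseq (φ k) 0 j + ∫ s in (0:ℝ)..t, dyadicRHS f0 (aseq (φ k) s) j := by
      intro k
      have := sol_integral (hsol (φ k)) j ht
      linarith
    have hInt : Tendsto (fun k => ∫ s in (0:ℝ)..t, dyadicRHS f0 (aseq (φ k) s) j) atTop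
        (nhds (∫ s in (0:ℝ)..t, dyadicRHS f0 (a s) j)) := by
      apply intervalIntegral.tendsto_integral_filter_of_dominated_convergence
        (bound := fun _ => Dbd f0 R ahat t j)
      · apply Eventually.of_forall; intro k
        apply ContinuousOn.aestronglyMeasurable _ measurableSet_uIoc
        have hsub : Set.uIoc (0:ℝ) t ⊆ Ici 0 := by
          rw [uIoc_of_le ht]; exact fun x hx => hx.1.le
        exact (rhs_continuousOn (fun i => sol_contOn (hsol (φ k)) i) j).mono hsub
      · apply Eventually.of_forall; intro k
        apply Eventually.of_forall; intro x hx
        rw [uIoc_of_le ht] at hx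
        rw [Real.norm_eq_abs]
        exact rhs_bound hf0 _ (fun i => hnn (φ k) i x hx.1.le)
          (fun i => hup (φ k) t ht i x ⟨hx.1.le, hx.2⟩)
          (Bnd_nonneg hf0 hR hahat_nn ht) j
      · exact intervalIntegrable_const
      · apply Eventually.of_forall; intro x hx
        rw [uIoc_of_le ht] at hx
        exact rhs_tendsto (fun i => htnd' i x hx.1.le) j
    have hL : Tendsto (fun k => aseq (φ k) t j) atTop (nhds (a t j)) := htnd' j t ht
    have hR' : Tendsto (fun k => aseq (φ k) 0 j
          + ∫ s in (0:ℝ)..t, dyadicRHS f0 (aseq (φ k) s) j) atTop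
        (nhds (a 0 j + ∫ s in (0:ℝ)..t, dyadicRHS f0 (a s) j)) :=
      (htnd' j 0 le_rfl).add hInt
    have heqf : (fun k => aseq (φ k) t j) = fun k => aseq (φ k) 0 j
        + ∫ s in (0:ℝ)..t, dyadicRHS f0 (aseq (φ k) s) j := funext hk
    rw [heqf] at hL
    exact tendsto_nhds_unique hL hR'
  have haode : ∀ j, ∀ t ∈ Ici (0:ℝ),
      HasDerivWithinAt (fun s => a s j) (dyadicRHS f0 (a t) j) (Ici 0) t := by
    intro j t ht
    set g : ℝ → ℝ := fun s => dyadicRHS f0 (a (max s 0)) j with hg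
    have hgc : Continuous g := by
      have hci : ∀ i, Continuous (fun s : ℝ => a (max s 0) i) := by
        intro i
        have hmax : Continuous fun s : ℝ => max s 0 := continuous_id.max continuous_const
        exact continuousOn_univ.mp
          ((hacont i).comp hmax.continuousOn (fun s _ => le_max_right s 0))
      exact continuousOn_univ.mp
        (rhs_continuousOn (s := univ) (fun i => (hci i).continuousOn) j)
    have hF : HasDerivAt (fun u => a 0 j + ∫ s in (0:ℝ)..u, g s) (g t) t :=
      ((hgc.integral_hasStrictDerivAt 0 t).hasDerivAt).const_add _
    have heq : ∀ x ∈ Ici (0:ℝ), a x j = a 0 j + ∫ s in (0:ℝ)..x, g s := by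
      intro x hx
      rw [hrep j x hx]
      congr 1
      apply intervalIntegral.integral_congr
      intro s hs
      rw [Set.uIcc_of_le hx] at hs
      simp only [hg]
      rw [max_eq_left hs.1]
    have hgt : g t = dyadicRHS f0 (a t) j := by
      simp only [hg]; rw [max_eq_left ht]
    have hfinal := (hF.hasDerivWithinAt (s := Ici 0)).congr
      (fun x hx => heq x hx) (heq t ht)
    rwa [hgt] at hfinal
  -- conclusion
  refine ⟨φ, hφ, a, ⟨hasum, haode⟩, haball, (fun j => hann j 0 le_rfl), ?_⟩
  intro ε hε T hT
  -- choose the tail cutoff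
  have htail : Tendsto (fun N => ∑' i : ℕ, lam ^ (-(((i+N:ℕ):ℝ)^2))) atTop (nhds 0) := by
    have := tendsto_sum_nat_add (fun j : ℕ => lam ^ (-((j:ℝ)^2)))
    exact this
  obtain ⟨N, hN⟩ : ∃ N : ℕ, ∑' i : ℕ, lam ^ (-(((i+N:ℕ):ℝ)^2)) < ε/2 := by
    have := (htail.eventually (eventually_lt_nhds (show (0:ℝ) < ε/2 by positivity)))
    obtain ⟨N, hN⟩ := this.exists
    exact ⟨N, hN⟩
  set ε' : ℝ := ε/(2*(N+1)) with hε'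
  have hε'0 : 0 < ε' := by positivity
  -- choose K working for all components j < N
  have hKs : ∀ j : ℕ, ∃ K, ∀ k, K ≤ k → ∀ t ∈ Icc (0:ℝ) T, |aseq (φ k) t j - a t j| ≤ ε' :=
    fun j => hunif j T hT.le ε' hε'0
  choose Ks hKs' using hKs
  refine ⟨Finset.sup (Finset.range N) Ks, ?_⟩
  intro k hk t ht
  -- estimate dw
  set x := aseq (φ k) t with hx
  set y := a t with hy
  set w : ℕ → ℝ := fun j => lam ^ (-((j:ℝ)^2)) with hw
  set rr : ℕ → ℝ := fun j => |x j - y j| / (1 + |x j - y j|) with hrr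
  have hrr0 : ∀ j, 0 ≤ rr j := fun j => by
    have : (0:ℝ) < 1 + |x j - y j| := by positivity
    positivity
  have hrr1 : ∀ j, rr j ≤ 1 := by
    intro j
    rw [hrr, div_le_one (by positivity)]
    linarith [abs_nonneg (x j - y j)]
  have hrrle : ∀ j, rr j ≤ |x j - y j| := by
    intro j
    rw [hrr, div_le_iff₀ (by positivity)]
    nlinarith [abs_nonneg (x j - y j)]
  have hw0 : ∀ j, 0 ≤ w j := fun j => (Real.rpow_pos_of_pos lam_pos _).le
  have hsummand : Summable (fun j => w j * rr j) := by
    refine Summable.of_nonneg_of_le (fun j => mul_nonneg (hw0 j) (hrr0 j)) ?_ weight_summable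
    intro j
    calc w j * rr j ≤ w j * 1 := mul_le_mul_of_nonneg_left (hrr1 j) (hw0 j)
      _ = w j := mul_one _
  have hdw : dw x y = ∑' j, w j * rr j := rfl
  rw [hdw, ← hsummand.sum_add_tsum_nat_add N]
  have hhead : ∑ j ∈ Finset.range N, w j * rr j ≤ N * ε' := by
    have hterm : ∀ j ∈ Finset.range N, w j * rr j ≤ ε' := by
      intro j hj
      have hKj : Ks j ≤ k := le_trans (Finset.le_sup hj) hk
      have h1 : |x j - y j| ≤ ε' := hKs' j k hKj t ht
      calc w j * rr j ≤ 1 * rr j := mul_le_mul_of_nonneg_right (weight_le_one j) (hrr0 j)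
        _ = rr j := one_mul _
        _ ≤ |x j - y j| := hrrle j
        _ ≤ ε' := h1
    calc ∑ j ∈ Finset.range N, w j * rr j ≤ ∑ _j ∈ Finset.range N, ε' :=
          Finset.sum_le_sum hterm
      _ = N * ε' := by rw [Finset.sum_const, Finset.card_range]; ring
  have htail2 : ∑' i : ℕ, w (i + N) * rr (i + N) ≤ ∑' i : ℕ, lam ^ (-(((i+N:ℕ):ℝ)^2)) := by
    refine Summable.tsum_le_tsum ?_ ?_ ?_
    · intro i
      calc w (i+N) * rr (i+N) ≤ w (i+N) * 1 :=
            mul_le_mul_of_nonneg_left (hrr1 _) (hw0 _)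
        _ = w (i+N) := mul_one _
        _ ≤ lam ^ (-(((i+N:ℕ):ℝ)^2)) := by rw [hw]
    · exact (summable_nat_add_iff N).2 hsummand
    · exact (summable_nat_add_iff N).2 weight_summable
  have hNε' : (N:ℝ) * ε' < ε/2 := by
    have h1 : (0:ℝ) < 2*((N:ℝ)+1) := by positivity
    rw [hε', ← mul_div_assoc, div_lt_div_iff₀ h1 (by norm_num : (0:ℝ) < 2)]
    nlinarith [hε, Nat.cast_nonneg (α := ℝ) N]
  calc ∑ j ∈ Finset.range N, w j * rr j + ∑' i : ℕ, w (i + N) * rr (i + N)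
      ≤ (N:ℝ) * ε' + ∑' i : ℕ, lam ^ (-(((i+N:ℕ):ℝ)^2)) := add_le_add hhead htail2
    _ < ε/2 + ε/2 := add_lt_add_of_lt_of_lt hNε' hN
    _ = ε := by ring
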